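/- Let q be a prime power, m ≥ 1, and let q_0(x) = x_1x_2 + ... + x_{r-1}x_r be a hyperbolic quadratic form of even rank r ≤ m on F_q^m. Then d(q_0, R_q(1,m)) = (q-1)q^{m-1} + q^{m−r/2−1} − q^{m−r/2}. -/

import Mathlib

variable {F : Type} [Field F] [Fintype F] [DecidableEq F]

/-- fiber count of linear form over `c` equals fiber over `0`, when coeff vector nonzero -/
lemma Vcnt_eq {s : ℕ} (u : Fin s → F) (hu : u ≠ 0) (c : F) :
    Fintype.card {v : Fin s → F // ∑ i, u i * v i = c}
      = Fintype.card {v : Fin s → F // ∑ i, u i * v i = 0} := by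
  obtain ⟨j, hj⟩ : ∃ j, u j ≠ 0 := by
    by_contra h; push_neg at h; exact hu (funext fun i => h i)
  set v₀ : Fin s → F := fun i => if i = j then c / u j else 0 with hv₀
  have hsum : ∑ i, u i * v₀ i = c := by
    rw [Finset.sum_eq_single j]
    · simp [hv₀]; field_simp
    · intro b _ hb; simp [hv₀, hb]
    · simp
  refine Fintype.card_congr ⟨fun v => ⟨v.1 - v₀, ?_⟩, fun v => ⟨v.1 + v₀, ?_⟩, ?_, ?_⟩
  · have := v.2
    simp only [Pi.sub_apply, mul_sub, Finset.sum_sub_distrib, this, hsum, sub_self]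
  · have := v.2
    simp only [Pi.add_apply, mul_add, Finset.sum_add_distrib, this, hsum, zero_add]
  · intro v; ext; simp
  · intro v; ext; simp

lemma Vcnt_zero {s : ℕ} (hs : 1 ≤ s) (u : Fin s → F) (hu : u ≠ 0) :
    Fintype.card {v : Fin s → F // ∑ i, u i * v i = 0}
      = Fintype.card F ^ (s - 1) := by
  obtain ⟨t, rfl⟩ : ∃ t, s = t + 1 := ⟨s - 1, by omega⟩
  have key : (Fintype.card F) * Fintype.card {v : Fin (t + 1) → F // ∑ i, u i * v i = 0}
      = Fintype.card F ^ (t + 1) := by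
    have h1 := Fintype.card_congr (Equiv.sigmaFiberEquiv (fun v : Fin (t + 1) → F => ∑ i, u i * v i))
    rw [Fintype.card_sigma] at h1
    calc Fintype.card F * Fintype.card {v : Fin (t + 1) → F // ∑ i, u i * v i = 0}
        = ∑ _c : F, Fintype.card {v : Fin (t + 1) → F // ∑ i, u i * v i = 0} := by
          rw [Finset.sum_const, Finset.card_univ, smul_eq_mul]
      _ = ∑ c : F, Fintype.card {v : Fin (t + 1) → F // ∑ i, u i * v i = c} := by
          exact Finset.sum_congr rfl fun c _ => (Vcnt_eq u hu c).symm
      _ = Fintype.card F ^ (t + 1) := by rw [h1, Fintype.card_fun, Fintype.card_fin]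
  have hq : 0 < Fintype.card F := Fintype.card_pos
  have h2 : Fintype.card F ^ (t + 1) = Fintype.card F * Fintype.card F ^ (t + 1 - 1) := by
    simp [pow_succ, mul_comm]
  exact Nat.eq_of_mul_eq_mul_left hq (by rw [key, h2])

lemma N_sum {s : ℕ} (c : F) :
    Fintype.card {p : (Fin s → F) × (Fin s → F) // ∑ i, p.1 i * p.2 i = c}
      = ∑ u : Fin s → F, Fintype.card {v : Fin s → F // ∑ i, u i * v i = c} := by
  rw [Fintype.card_congr (Equiv.subtypeProdEquivSigmaSubtype
    (fun (u v : Fin s → F) => ∑ i, u i * v i = c)), Fintype.card_sigma]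

lemma Vcnt_full {s : ℕ} :
    Fintype.card {v : Fin s → F // ∑ i, (0 : Fin s → F) i * v i = (0 : F)}
      = Fintype.card F ^ s := by
  rw [Fintype.card_congr (Equiv.subtypeUnivEquiv (by simp)), Fintype.card_fun,
    Fintype.card_fin]

lemma N_le {s : ℕ} (c : F) :
    Fintype.card {p : (Fin s → F) × (Fin s → F) // ∑ i, p.1 i * p.2 i = c}
      ≤ Fintype.card {p : (Fin s → F) × (Fin s → F) // ∑ i, p.1 i * p.2 i = 0} := by
  rw [N_sum, N_sum]
  refine Finset.sum_le_sum fun u _ => ?_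
  by_cases hu : u = 0
  · subst hu
    rw [Vcnt_full]
    calc Fintype.card {v : Fin s → F // ∑ i, (0 : Fin s → F) i * v i = c}
        ≤ Fintype.card (Fin s → F) := Fintype.card_subtype_le _
      _ = Fintype.card F ^ s := by rw [Fintype.card_fun, Fintype.card_fin]
  · exact le_of_eq (Vcnt_eq u hu c)

lemma N_zero {s : ℕ} (hs : 1 ≤ s) :
    Fintype.card {p : (Fin s → F) × (Fin s → F) // ∑ i, p.1 i * p.2 i = 0}
      = (Fintype.card F ^ s - 1) * Fintype.card F ^ (s - 1) + Fintype.card F ^ s := by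
  rw [N_sum]
  rw [← Finset.sum_erase_add _ _ (Finset.mem_univ (0 : Fin s → F))]
  have h1 : ∀ u ∈ Finset.univ.erase (0 : Fin s → F),
      Fintype.card {v : Fin s → F // ∑ i, u i * v i = 0} = Fintype.card F ^ (s - 1) :=
    fun u hu => Vcnt_zero hs u (Finset.ne_of_mem_erase hu)
  rw [Finset.sum_congr rfl h1, Finset.sum_const, Finset.card_erase_of_mem (Finset.mem_univ _),
    Finset.card_univ, Fintype.card_fun, Fintype.card_fin, smul_eq_mul, Vcnt_full]


def interEquiv {m s : ℕ} (hn : 2 * s ≤ m) (a b : Fin s → F) :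
    (Fin m → F) ≃ ((Fin (m - 2 * s) → F) × ((Fin s → F) × (Fin s → F))) where
  toFun x := (fun j => x ⟨2 * s + j.val, by have := j.isLt; omega⟩,
              (fun i => x ⟨2 * i.val, by have := i.isLt; linarith⟩ - a i,
               fun i => x ⟨2 * i.val + 1, by have := i.isLt; linarith⟩ - b i))
  invFun p := fun k => if h : k.val < 2 * s then
      (if h2 : k.val % 2 = 0 then
        p.2.1 ⟨k.val / 2, by omega⟩ + a ⟨k.val / 2, by omega⟩
      else
        p.2.2 ⟨k.val / 2, by omega⟩ + b ⟨k.val / 2, by omega⟩)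
    else p.1 ⟨k.val - 2 * s, by have := k.isLt; omega⟩
  left_inv x := by
    funext k
    by_cases h : k.val < 2 * s
    · by_cases h2 : k.val % 2 = 0
      · simp only [dif_pos h, dif_pos h2, sub_add_cancel]
        congr 1
        ext
        simp
        omega
      · simp only [dif_pos h, dif_neg h2, sub_add_cancel]
        congr 1
        ext
        simp
        omega
    · simp only [dif_neg h]
      congr 1
      ext
      simp
      omega
  right_inv p := by
    obtain ⟨z, u, v⟩ := p
    refine Prod.ext ?_ (Prod.ext ?_ ?_)
    · funext j
      have h : ¬ (2 * s + j.val < 2 * s) := by omega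
      simp only [dif_neg h]
      congr 1
      ext
      simp
    · funext i
      have h : 2 * i.val < 2 * s := by have := i.isLt; linarith
      have h2 : 2 * i.val % 2 = 0 := by omega
      simp only [dif_pos h, dif_pos h2]
      have e : (⟨2 * i.val / 2, by omega⟩ : Fin s) = i := by ext; simp only [Fin.val_mk]; omega
      rw [e]
      ring
    · funext i
      have h : 2 * i.val + 1 < 2 * s := by have := i.isLt; linarith
      have h2 : ¬ ((2 * i.val + 1) % 2 = 0) := by omega
      simp only [dif_pos h, dif_neg h2]
      have e : (⟨(2 * i.val + 1) / 2, by omega⟩ : Fin s) = i := by ext; simp only [Fin.val_mk]; omega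
      rw [e]
      ring

lemma card_inter {m s : ℕ} (hn : 2 * s ≤ m) (a b : Fin s → F)
    (c : Fin (m - 2 * s) → F) (γ : F) :
    Fintype.card {x : Fin m → F //
        ∑ i : Fin s, (x ⟨2 * i.val, by have := i.isLt; linarith⟩ - a i) *
            (x ⟨2 * i.val + 1, by have := i.isLt; linarith⟩ - b i)
          = (∑ j : Fin (m - 2 * s), c j * x ⟨2 * s + j.val, by have := j.isLt; omega⟩) + γ}
      = ∑ z : Fin (m - 2 * s) → F,
          Fintype.card {p : (Fin s → F) × (Fin s → F) //
            ∑ i, p.1 i * p.2 i = (∑ j, c j * z j) + γ} := by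
  calc Fintype.card {x : Fin m → F //
        ∑ i : Fin s, (x ⟨2 * i.val, by have := i.isLt; linarith⟩ - a i) *
            (x ⟨2 * i.val + 1, by have := i.isLt; linarith⟩ - b i)
          = (∑ j : Fin (m - 2 * s), c j * x ⟨2 * s + j.val, by have := j.isLt; omega⟩) + γ}
      = Fintype.card {p : (Fin (m - 2 * s) → F) × ((Fin s → F) × (Fin s → F)) //
          ∑ i, p.2.1 i * p.2.2 i = (∑ j, c j * p.1 j) + γ} :=
        Fintype.card_congr ((interEquiv hn a b).subtypeEquiv (fun x => Iff.rfl))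
    _ = Fintype.card (Σ z : Fin (m - 2 * s) → F, {uv : (Fin s → F) × (Fin s → F) //
          ∑ i, uv.1 i * uv.2 i = (∑ j, c j * z j) + γ}) :=
        Fintype.card_congr (Equiv.subtypeProdEquivSigmaSubtype
          (fun (z : Fin (m - 2 * s) → F) (uv : (Fin s → F) × (Fin s → F)) =>
            ∑ i, uv.1 i * uv.2 i = (∑ j, c j * z j) + γ))
    _ = ∑ z : Fin (m - 2 * s) → F,
          Fintype.card {p : (Fin s → F) × (Fin s → F) //
            ∑ i, p.1 i * p.2 i = (∑ j, c j * z j) + γ} := Fintype.card_sigma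

lemma sum_range_two_mul {M : Type*} [AddCommMonoid M] (f : ℕ → M) (s : ℕ) :
    ∑ k ∈ Finset.range (2 * s), f k
      = ∑ i ∈ Finset.range s, (f (2 * i) + f (2 * i + 1)) := by
  induction s with
  | zero => simp
  | succ n ih =>
    have h : 2 * (n + 1) = 2 * n + 1 + 1 := by ring
    rw [h, Finset.sum_range_succ, Finset.sum_range_succ, ih, Finset.sum_range_succ]
    abel

lemma split3 {M : Type*} [AddCommMonoid M] (f : ℕ → M) (s t : ℕ) :
    ∑ k ∈ Finset.range (2 * s + t), f k
      = (∑ i ∈ Finset.range s, (f (2 * i) + f (2 * i + 1)))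
        + ∑ j ∈ Finset.range t, f (2 * s + j) := by
  rw [Finset.sum_range_add, sum_range_two_mul]

lemma linear_split {m s : ℕ} (hn : 2 * s ≤ m) (α x : Fin m → F) :
    ∑ k : Fin m, α k * x k
      = (∑ i : Fin s, (α ⟨2 * i.val, by have := i.isLt; linarith⟩ *
            x ⟨2 * i.val, by have := i.isLt; linarith⟩ +
          α ⟨2 * i.val + 1, by have := i.isLt; linarith⟩ *
            x ⟨2 * i.val + 1, by have := i.isLt; linarith⟩))
        + ∑ j : Fin (m - 2 * s), α ⟨2 * s + j.val, by have := j.isLt; omega⟩ *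
            x ⟨2 * s + j.val, by have := j.isLt; omega⟩ := by
  set f : ℕ → F := fun k => if h : k < m then α ⟨k, h⟩ * x ⟨k, h⟩ else 0 with hf
  have h0 : ∑ k : Fin m, α k * x k = ∑ k ∈ Finset.range m, f k := by
    rw [← Fin.sum_univ_eq_sum_range]
    exact Finset.sum_congr rfl fun k _ => by simp [hf]
  have hm2 : m = 2 * s + (m - 2 * s) := by omega
  rw [h0]
  conv_lhs => rw [hm2]
  rw [split3]
  congr 1
  · rw [← Fin.sum_univ_eq_sum_range (fun i => f (2 * i) + f (2 * i + 1)) s]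
    refine Finset.sum_congr rfl fun i _ => ?_
    have h1 : 2 * i.val < m := by have := i.isLt; linarith
    have h2 : 2 * i.val + 1 < m := by have := i.isLt; linarith
    simp [hf, h1, h2]
  · rw [← Fin.sum_univ_eq_sum_range (fun j => f (2 * s + j)) (m - 2 * s)]
    refine Finset.sum_congr rfl fun j _ => ?_
    have h1 : 2 * s + j.val < m := by have := j.isLt; omega
    simp [hf, h1]

lemma cond_iff {m s : ℕ} (hn : 2 * s ≤ m) (α : Fin m → F) (β : F)
    (q0 : (Fin m → F) → F)
    (hq0 : ∀ x : Fin m → F, q0 x =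
      ∑ i : Fin s, x ⟨2 * i.val, by have := i.isLt; linarith⟩ *
        x ⟨2 * i.val + 1, by have := i.isLt; linarith⟩) (x : Fin m → F) :
    (q0 x = (∑ i, α i * x i) + β) ↔
    (∑ i : Fin s, (x ⟨2 * i.val, by have := i.isLt; linarith⟩ -
          α ⟨2 * i.val + 1, by have := i.isLt; linarith⟩) *
        (x ⟨2 * i.val + 1, by have := i.isLt; linarith⟩ -
          α ⟨2 * i.val, by have := i.isLt; linarith⟩)
      = (∑ j : Fin (m - 2 * s), α ⟨2 * s + j.val, by have := j.isLt; omega⟩ *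
            x ⟨2 * s + j.val, by have := j.isLt; omega⟩)
        + (β + ∑ i : Fin s, α ⟨2 * i.val + 1, by have := i.isLt; linarith⟩ *
            α ⟨2 * i.val, by have := i.isLt; linarith⟩)) := by
  rw [hq0 x, linear_split hn α x]
  have key : ∑ i : Fin s, (x ⟨2 * i.val, by have := i.isLt; linarith⟩ -
          α ⟨2 * i.val + 1, by have := i.isLt; linarith⟩) *
        (x ⟨2 * i.val + 1, by have := i.isLt; linarith⟩ -
          α ⟨2 * i.val, by have := i.isLt; linarith⟩)
      = ((∑ i : Fin s, x ⟨2 * i.val, by have := i.isLt; linarith⟩ *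
            x ⟨2 * i.val + 1, by have := i.isLt; linarith⟩)
        - ∑ i : Fin s, (α ⟨2 * i.val, by have := i.isLt; linarith⟩ *
            x ⟨2 * i.val, by have := i.isLt; linarith⟩ +
          α ⟨2 * i.val + 1, by have := i.isLt; linarith⟩ *
            x ⟨2 * i.val + 1, by have := i.isLt; linarith⟩))
        + ∑ i : Fin s, α ⟨2 * i.val + 1, by have := i.isLt; linarith⟩ *
            α ⟨2 * i.val, by have := i.isLt; linarith⟩ := by
    rw [← Finset.sum_sub_distrib, ← Finset.sum_add_distrib]
    exact Finset.sum_congr rfl fun i _ => by ring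
  rw [key]
  constructor <;> intro h <;> linear_combination h

lemma card_affine {m s : ℕ} (hn : 2 * s ≤ m) (α : Fin m → F) (β : F)
    (q0 : (Fin m → F) → F)
    (hq0 : ∀ x : Fin m → F, q0 x =
      ∑ i : Fin s, x ⟨2 * i.val, by have := i.isLt; linarith⟩ *
        x ⟨2 * i.val + 1, by have := i.isLt; linarith⟩) :
    Fintype.card {x : Fin m → F // q0 x = (∑ i, α i * x i) + β}
      = ∑ z : Fin (m - 2 * s) → F,
          Fintype.card {p : (Fin s → F) × (Fin s → F) //
            ∑ i, p.1 i * p.2 i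
              = (∑ j : Fin (m - 2 * s), α ⟨2 * s + j.val, by have := j.isLt; omega⟩ * z j)
                + (β + ∑ i : Fin s, α ⟨2 * i.val + 1, by have := i.isLt; linarith⟩ *
                    α ⟨2 * i.val, by have := i.isLt; linarith⟩)} := by
  refine Eq.trans (Fintype.card_congr (Equiv.subtypeEquivRight
      (fun x => cond_iff hn α β q0 hq0 x)))
    (card_inter hn
      (fun i => α ⟨2 * i.val + 1, by have := i.isLt; linarith⟩)
      (fun i => α ⟨2 * i.val, by have := i.isLt; linarith⟩)
      (fun j => α ⟨2 * s + j.val, by have := j.isLt; omega⟩)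
      (β + ∑ i : Fin s, α ⟨2 * i.val + 1, by have := i.isLt; linarith⟩ *
        α ⟨2 * i.val, by have := i.isLt; linarith⟩))

lemma ham_compl {ι : Type} [Fintype ι] (f g : ι → F) :
    hammingDist f g = Fintype.card ι - Fintype.card {x // f x = g x} := by
  classical
  have h1 : Fintype.card {x // f x = g x}
      = (Finset.univ.filter fun x => f x = g x).card := Fintype.card_subtype _
  have h2 : (Finset.univ.filter fun x : ι => f x = g x).card
      + (Finset.univ.filter fun x : ι => ¬ (f x = g x)).card = Fintype.card ι := by
    rw [Finset.card_filter_add_card_filter_not, Finset.card_univ]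
  have h3 : hammingDist f g = (Finset.univ.filter fun x : ι => ¬ (f x = g x)).card := by
    simp [hammingDist]
  omega

/-- for the hyperbolic quadratic form `q₀(x) = x₁x₂ + ⋯ + x_{r-1}x_r` of
even rank `r = 2s ≤ m` on `F_q^m`,
`d(q₀, R_q(1,m)) = (q-1)q^{m-1} + q^{m-r/2-1} - q^{m-r/2}`. -/
theorem dist_hyperbolic_to_affine
    {F : Type} [Field F] [Fintype F] [DecidableEq F] {m s : ℕ}
    (hm : 1 ≤ m) (hn : 2 * s ≤ m) (q0 : (Fin m → F) → F)
    (hq0 : ∀ x : Fin m → F, q0 x =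
      ∑ i : Fin s, x ⟨2 * i.val, by have := i.isLt; omega⟩ *
        x ⟨2 * i.val + 1, by have := i.isLt; omega⟩) :
    sInf {d : ℕ | ∃ α : Fin m → F, ∃ β : F,
        d = hammingDist q0 (fun x => (∑ i, α i * x i) + β)} =
      (Fintype.card F - 1) * Fintype.card F ^ (m - 1)
        + Fintype.card F ^ (m - s - 1) - Fintype.card F ^ (m - s) := by
  classical
  have hq2 : 2 ≤ Fintype.card F := Fintype.one_lt_card
  by_cases hs0 : s = 0
  · subst hs0
    have hfun : q0 = fun x => (∑ i, (0 : Fin m → F) i * x i) + 0 := by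
      funext x; rw [hq0 x]; simp
    have hmem : (0 : ℕ) ∈ {d : ℕ | ∃ α : Fin m → F, ∃ β : F,
        d = hammingDist q0 (fun x => (∑ i, α i * x i) + β)} := by
      refine ⟨0, 0, ?_⟩
      rw [← hfun, hammingDist_self]
    rw [Nat.sInf_eq_zero.mpr (Or.inl hmem)]
    obtain ⟨t, rfl⟩ : ∃ t, m = t + 1 := ⟨m - 1, by omega⟩
    simp only [Nat.sub_zero, Nat.add_sub_cancel]
    have h : Fintype.card F ^ (t + 1) = Fintype.card F * Fintype.card F ^ t := by
      rw [pow_succ, mul_comm]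
    have hle : Fintype.card F ^ t ≤ Fintype.card F * Fintype.card F ^ t :=
      Nat.le_mul_of_pos_left _ (by omega)
    rw [h, Nat.sub_one_mul]
    omega
  · have hs1 : 1 ≤ s := by omega
    have hcard : Fintype.card (Fin m → F) = Fintype.card F ^ m := by
      rw [Fintype.card_fun, Fintype.card_fin]
    have hcardz : Fintype.card (Fin (m - 2 * s) → F) = Fintype.card F ^ (m - 2 * s) := by
      rw [Fintype.card_fun, Fintype.card_fin]
    obtain ⟨N0, hN0⟩ : ∃ n : ℕ, Fintype.card {p : (Fin s → F) × (Fin s → F) //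
        ∑ i, p.1 i * p.2 i = (0 : F)} = n := ⟨_, rfl⟩
    -- lower bound for every element of the set
    have hub : ∀ (α : Fin m → F) (β : F),
        Fintype.card F ^ m - Fintype.card F ^ (m - 2 * s) * N0
          ≤ hammingDist q0 (fun x => (∑ i, α i * x i) + β) := by
      intro α β
      rw [ham_compl, hcard, card_affine hn α β q0 hq0]
      apply Nat.sub_le_sub_left
      calc ∑ z : Fin (m - 2 * s) → F,
            Fintype.card {p : (Fin s → F) × (Fin s → F) //
              ∑ i, p.1 i * p.2 i
                = (∑ j : Fin (m - 2 * s), α ⟨2 * s + j.val, by have := j.isLt; omega⟩ * z j)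
                  + (β + ∑ i : Fin s, α ⟨2 * i.val + 1, by have := i.isLt; omega⟩ *
                      α ⟨2 * i.val, by have := i.isLt; omega⟩)}
          ≤ ∑ _z : Fin (m - 2 * s) → F, N0 :=
            Finset.sum_le_sum fun z _ => le_of_le_of_eq (N_le _) hN0
        _ = Fintype.card F ^ (m - 2 * s) * N0 := by
            rw [Finset.sum_const, Finset.card_univ, hcardz, smul_eq_mul]
    -- the value is attained at α = 0, β = 0
    have heq : hammingDist q0 (fun x => (∑ i, (0 : Fin m → F) i * x i) + 0)
        = Fintype.card F ^ m - Fintype.card F ^ (m - 2 * s) * N0 := by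
      rw [ham_compl, hcard, card_affine hn 0 0 q0 hq0]
      congr 1
      calc ∑ z : Fin (m - 2 * s) → F,
            Fintype.card {p : (Fin s → F) × (Fin s → F) //
              ∑ i, p.1 i * p.2 i
                = (∑ j : Fin (m - 2 * s), (0 : Fin m → F) ⟨2 * s + j.val, by have := j.isLt; omega⟩ * z j)
                  + ((0 : F) + ∑ i : Fin s, (0 : Fin m → F) ⟨2 * i.val + 1, by have := i.isLt; omega⟩ *
                      (0 : Fin m → F) ⟨2 * i.val, by have := i.isLt; omega⟩)}
          = ∑ _z : Fin (m - 2 * s) → F, N0 := by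
            refine Finset.sum_congr rfl fun z _ => Eq.trans ?_ hN0
            refine Fintype.card_congr (Equiv.subtypeEquivRight fun p => ?_)
            simp
        _ = Fintype.card F ^ (m - 2 * s) * N0 := by
            rw [Finset.sum_const, Finset.card_univ, hcardz, smul_eq_mul]
    have hmem : Fintype.card F ^ m - Fintype.card F ^ (m - 2 * s) * N0
        ∈ {d : ℕ | ∃ α : Fin m → F, ∃ β : F,
          d = hammingDist q0 (fun x => (∑ i, α i * x i) + β)} := ⟨0, 0, heq.symm⟩
    have hinf : sInf {d : ℕ | ∃ α : Fin m → F, ∃ β : F,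
        d = hammingDist q0 (fun x => (∑ i, α i * x i) + β)}
        = Fintype.card F ^ m - Fintype.card F ^ (m - 2 * s) * N0 := by
      refine le_antisymm (Nat.sInf_le hmem) (le_csInf ⟨_, hmem⟩ ?_)
      rintro d ⟨α, β, rfl⟩
      exact hub α β
    rw [hinf, ← hN0, N_zero hs1]
    clear hq0 hub heq hmem hinf hN0 q0
    have p1 : Fintype.card F ^ (m - 2 * s) * Fintype.card F ^ (s - 1)
        = Fintype.card F ^ (m - s - 1) := by rw [← pow_add]; congr 1; omega
    have p2 : Fintype.card F ^ (m - 2 * s) * Fintype.card F ^ s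
        = Fintype.card F ^ (m - s) := by rw [← pow_add]; congr 1; omega
    have p3 : Fintype.card F ^ s * Fintype.card F ^ (m - s - 1)
        = Fintype.card F ^ (m - 1) := by rw [← pow_add]; congr 1; omega
    have e1 : Fintype.card F ^ (m - 2 * s) *
        ((Fintype.card F ^ s - 1) * Fintype.card F ^ (s - 1) + Fintype.card F ^ s)
        = (Fintype.card F ^ (m - 1) - Fintype.card F ^ (m - s - 1))
          + Fintype.card F ^ (m - s) := by
      calc Fintype.card F ^ (m - 2 * s) *
          ((Fintype.card F ^ s - 1) * Fintype.card F ^ (s - 1) + Fintype.card F ^ s)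
          = (Fintype.card F ^ s - 1) *
              (Fintype.card F ^ (m - 2 * s) * Fintype.card F ^ (s - 1))
            + Fintype.card F ^ (m - 2 * s) * Fintype.card F ^ s := by ring
        _ = (Fintype.card F ^ s - 1) * Fintype.card F ^ (m - s - 1)
            + Fintype.card F ^ (m - s) := by rw [p1, p2]
        _ = (Fintype.card F ^ s * Fintype.card F ^ (m - s - 1)
              - Fintype.card F ^ (m - s - 1)) + Fintype.card F ^ (m - s) := by
            rw [Nat.sub_one_mul]
        _ = (Fintype.card F ^ (m - 1) - Fintype.card F ^ (m - s - 1))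
            + Fintype.card F ^ (m - s) := by rw [p3]
    rw [e1]
    have f6 : (Fintype.card F - 1) * Fintype.card F ^ (m - 1)
        = Fintype.card F ^ m - Fintype.card F ^ (m - 1) := by
      rw [Nat.sub_one_mul]
      congr 1
      rw [← pow_succ']
      congr 1
      omega
    rw [f6]
    have g1 : Fintype.card F ^ (m - s - 1) ≤ Fintype.card F ^ (m - 1) :=
      Nat.pow_le_pow_right (by omega) (by omega)
    have g2 : Fintype.card F ^ (m - s) ≤ Fintype.card F ^ (m - 1) :=
      Nat.pow_le_pow_right (by omega) (by omega)
    have g3 : 2 * Fintype.card F ^ (m - 1) ≤ Fintype.card F ^ m := by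
      calc 2 * Fintype.card F ^ (m - 1) ≤ Fintype.card F * Fintype.card F ^ (m - 1) :=
            Nat.mul_le_mul_right _ hq2
        _ = Fintype.card F ^ m := by rw [← pow_succ']; congr 1; omega
    have g4 : Fintype.card F ^ (m - s - 1) ≤ Fintype.card F ^ (m - s) :=
      Nat.pow_le_pow_right (by omega) (by omega)
    omega
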